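/- Strong distributivity is valid: for any unit vectors ψ ∈ ⊗^n ℂ², φ ∈ ⊗^m ℂ², χ ∈ ⊗^k ℂ², Prob(AND(ψ, OR(φ, χ))) ≤ Prob(OR(AND(ψ, φ), AND(ψ, χ))). -/

import Mathlib

open Complex Finset

noncomputable section

/-- The `n`-fold tensor power of `ℂ²`, identified with `EuclideanSpace ℂ (Fin (2^n))`. -/
abbrev QReg (n : ℕ) := EuclideanSpace ℂ (Fin (2 ^ n))

/-- Flip the last bit of a binary index. -/
def flipIdx {N : ℕ} (j : Fin N) : Fin N :=
  ⟨(j.val ^^^ 1) % N, Nat.mod_lt _ j.pos⟩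

/-- The gate `NOT⁽ⁿ⁾`: flips the last bit of each basis label, i.e. swaps the
coordinates `a_{2k}` and `a_{2k+1}`. -/
def NOTg (n : ℕ) (ψ : QReg n) : QReg n := WithLp.toLp 2 (fun j => ψ (flipIdx j))

/-- The gate `√NOT⁽ⁿ⁾`: replaces each coordinate pair `(a_{2k}, a_{2k+1})` by
`(½(1+i)a_{2k} + ½(1−i)a_{2k+1}, ½(1−i)a_{2k} + ½(1+i)a_{2k+1})`. -/
def sqNOTg (n : ℕ) (ψ : QReg n) : QReg n := WithLp.toLp 2 (fun j =>
  if j.val % 2 = 0 then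
    (1 + Complex.I) / 2 * ψ j + (1 - Complex.I) / 2 * ψ (flipIdx j)
  else
    (1 - Complex.I) / 2 * ψ (flipIdx j) + (1 + Complex.I) / 2 * ψ j)

/-- Action of the Toffoli gate `T⁽ⁿ'ᵐ'¹⁾` on basis indices: if the bits `xₙ`
(weight `2^(m+1)`) and `y_m` (weight `2`) are both `1`, flip the last bit `z`. -/
def toffIdx (n m : ℕ) (j : Fin (2 ^ (n + m + 1))) : Fin (2 ^ (n + m + 1)) :=
  if (j.val / 2 ^ (m + 1)) % 2 = 1 ∧ (j.val / 2) % 2 = 1 then flipIdx j else j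

/-- The Toffoli gate `T⁽ⁿ'ᵐ'¹⁾`. -/
def Tg (n m : ℕ) (ψ : QReg (n + m + 1)) : QReg (n + m + 1) := WithLp.toLp 2 (fun j => ψ (toffIdx n m j))

/-- Tensor product of coefficient vectors: `(ψ ⊗ φ)_{2^m·j + k} = ψ_j · φ_k`. -/
def tensor {n m : ℕ} (ψ : QReg n) (φ : QReg m) : QReg (n + m) := WithLp.toLp 2 (fun j : Fin (2 ^ (n + m)) =>
  ψ ⟨j.val / 2 ^ m, by
        have h : (j : ℕ) < 2 ^ n * 2 ^ m :=
          lt_of_lt_of_le j.isLt (le_of_eq (pow_add 2 n m))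
        exact (Nat.div_lt_iff_lt_mul (Nat.two_pow_pos m)).mpr h⟩ *
  φ ⟨j.val % 2 ^ m, Nat.mod_lt _ (Nat.two_pow_pos m)⟩)

/-- The bit `|0⟩ = e₀ ∈ ℂ²`. -/
def ket0 : QReg 1 := WithLp.toLp 2 (fun j : Fin (2 ^ 1) => if j.val = 0 then 1 else 0)

/-- `AND(ψ, φ) := T⁽ⁿ'ᵐ'¹⁾(ψ ⊗ φ ⊗ |0⟩)`. -/
def ANDg (n m : ℕ) (ψ : QReg n) (φ : QReg m) : QReg (n + m + 1) :=
  Tg n m (tensor (tensor ψ φ) ket0)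

/-- `OR(ψ, φ) := NOT(AND(NOT ψ, NOT φ))`. -/
def ORg (n m : ℕ) (ψ : QReg n) (φ : QReg m) : QReg (n + m + 1) :=
  NOTg (n + m + 1) (ANDg n m (NOTg n ψ) (NOTg m φ))

/-- The probability-value of a vector: the sum of `‖a_j‖²` over the odd indices `j`
(those whose basis label ends with the bit `1`). -/
def Prob {n : ℕ} (ψ : QReg n) : ℝ :=
  ∑ j ∈ Finset.univ.filter (fun j : Fin (2 ^ n) => j.val % 2 = 1), ‖ψ j‖ ^ 2

/-! ### Auxiliary lemmas -/


lemma xor_even' (c : ℕ) : (2*c) ^^^ 1 = 2*c+1 := by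
  have := Nat.xor_bit false c true 0
  simpa [Nat.bit_val] using this

lemma xor_odd' (c : ℕ) : (2*c+1) ^^^ 1 = 2*c := by
  have := Nat.xor_bit true c true 0
  simpa [Nat.bit_val] using this

lemma xor_one_cases (j : ℕ) :
    (j % 2 = 0 ∧ j ^^^ 1 = j + 1) ∨ (j % 2 = 1 ∧ j ^^^ 1 = j - 1) := by
  rcases Nat.mod_two_eq_zero_or_one j with h | h
  · left
    obtain ⟨c, hc⟩ : ∃ c, j = 2*c := ⟨j/2, by omega⟩
    subst hc
    exact ⟨h, xor_even' c⟩
  · right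
    obtain ⟨c, hc⟩ : ∃ c, j = 2*c+1 := ⟨j/2, by omega⟩
    subst hc
    refine ⟨h, ?_⟩
    rw [xor_odd' c]; omega

lemma flip_val {n : ℕ} (hn : 1 ≤ n) (j : Fin (2^n)) : (flipIdx j).val = j.val ^^^ 1 := by
  have h2 : (2:ℕ) ∣ 2^n := dvd_pow_self 2 (by omega)
  have hlt : j.val ^^^ 1 < 2^n := by
    rcases xor_one_cases j.val with ⟨h1, h2'⟩ | ⟨h1, h2'⟩ <;>
      · have := j.isLt; omega
  exact Nat.mod_eq_of_lt hlt

lemma flip_invol {n : ℕ} (hn : 1 ≤ n) :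
    Function.Involutive (flipIdx : Fin (2^n) → Fin (2^n)) := by
  intro j
  apply Fin.ext
  rw [flip_val hn, flip_val hn, Nat.xor_assoc, Nat.xor_self, Nat.xor_zero]

lemma normSq_eq {n : ℕ} (ψ : QReg n) : ‖ψ‖^2 = ∑ j, ‖ψ j‖^2 := by
  rw [EuclideanSpace.norm_eq, Real.sq_sqrt (by positivity)]

lemma prob_eq {n : ℕ} (ψ : QReg n) :
    Prob ψ = ∑ j, if (j : Fin (2^n)).val % 2 = 1 then ‖ψ j‖^2 else 0 :=
  Finset.sum_filter _ _

lemma prob_nonneg {n : ℕ} (ψ : QReg n) : 0 ≤ Prob ψ :=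
  Finset.sum_nonneg fun _ _ => by positivity

lemma prob_le_normSq {n : ℕ} (ψ : QReg n) : Prob ψ ≤ ‖ψ‖^2 := by
  rw [normSq_eq]
  exact Finset.sum_le_univ_sum_of_nonneg fun _ => by positivity

lemma prob_NOT {n : ℕ} (hn : 1 ≤ n) (ψ : QReg n) :
    Prob (NOTg n ψ) = ‖ψ‖^2 - Prob ψ := by
  have key : Prob (NOTg n ψ) + Prob ψ = ‖ψ‖^2 := by
    rw [normSq_eq, prob_eq, prob_eq]
    have h1 : ∑ j : Fin (2^n), (if j.val % 2 = 1 then ‖(NOTg n ψ) j‖^2 else 0)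
        = ∑ j : Fin (2^n), (if j.val % 2 = 0 then ‖ψ j‖^2 else 0) := by
      apply Fintype.sum_bijective flipIdx (flip_invol hn).bijective
      intro j
      have hv : (flipIdx j).val = j.val ^^^ 1 := flip_val hn j
      have hm2 := xor_one_cases j.val
      by_cases hj : j.val % 2 = 1
      · rw [if_pos hj, if_pos (by rw [hv]; rcases hm2 with ⟨h1,h2⟩|⟨h1,h2⟩ <;> omega)]
        rfl
      · rw [if_neg hj, if_neg (by rw [hv]; rcases hm2 with ⟨h1,h2⟩|⟨h1,h2⟩ <;> omega)]
    rw [h1, ← Finset.sum_add_distrib]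
    apply Finset.sum_congr rfl
    intro j _
    by_cases hj : j.val % 2 = 1
    · rw [if_neg (by omega), if_pos hj, zero_add]
    · rw [if_pos (by omega), if_neg hj, add_zero]
  linarith

lemma normSq_NOT {n : ℕ} (hn : 1 ≤ n) (ψ : QReg n) : ‖NOTg n ψ‖^2 = ‖ψ‖^2 := by
  rw [normSq_eq, normSq_eq]
  exact Fintype.sum_bijective flipIdx (flip_invol hn).bijective _ _ fun j => rfl

lemma combine_lt {n m : ℕ} (a : Fin (2^n)) (b : Fin (2^m)) :
    2^m * a.val + b.val < 2^(n+m) := by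
  calc 2^m * a.val + b.val < 2^m * a.val + 2^m := by
        exact Nat.add_lt_add_left b.isLt _
    _ = 2^m * (a.val + 1) := by ring
    _ ≤ 2^m * 2^n := Nat.mul_le_mul_left _ a.isLt
    _ = 2^(n+m) := by rw [pow_add]; ring

/-- The base-2 splitting equivalence. -/
def splitE (n m : ℕ) : Fin (2^n) × Fin (2^m) ≃ Fin (2^(n+m)) where
  toFun p := ⟨2^m * p.1.val + p.2.val, combine_lt p.1 p.2⟩
  invFun j := (⟨j.val / 2^m, by
      have h : (j : ℕ) < 2 ^ n * 2 ^ m := lt_of_lt_of_le j.isLt (le_of_eq (pow_add 2 n m))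
      exact (Nat.div_lt_iff_lt_mul (Nat.two_pow_pos m)).mpr h⟩,
    ⟨j.val % 2^m, Nat.mod_lt _ (Nat.two_pow_pos m)⟩)
  left_inv p := by
    ext
    · show (2^m * p.1.val + p.2.val) / 2^m = p.1.val
      rw [Nat.mul_add_div (Nat.two_pow_pos m), Nat.div_eq_of_lt p.2.isLt, add_zero]
    · show (2^m * p.1.val + p.2.val) % 2^m = p.2.val
      rw [Nat.mul_add_mod, Nat.mod_eq_of_lt p.2.isLt]
  right_inv j := by
    apply Fin.ext
    exact Nat.div_add_mod j.val (2^m)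

lemma sum_split (n m : ℕ) (f : Fin (2^(n+m)) → ℝ) :
    ∑ j, f j = ∑ a : Fin (2^n), ∑ b : Fin (2^m), f (splitE n m (a, b)) := by
  calc ∑ j, f j = ∑ p : Fin (2^n) × Fin (2^m), f (splitE n m p) :=
        (Fintype.sum_equiv (splitE n m) _ f fun p => rfl).symm
    _ = ∑ a : Fin (2^n), ∑ b : Fin (2^m), f (splitE n m (a, b)) :=
        Fintype.sum_prod_type _

lemma tensor_apply {n m : ℕ} (u : QReg n) (v : QReg m) (j : Fin (2^(n+m)))
    (a : Fin (2^n)) (b : Fin (2^m)) (h : j.val = 2^m * a.val + b.val) :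
    tensor u v j = u a * v b := by
  unfold tensor
  rw [WithLp.ofLp_toLp]
  congr 1
  · apply congrArg
    apply Fin.ext
    show j.val / 2^m = a.val
    rw [h, Nat.mul_add_div (Nat.two_pow_pos m), Nat.div_eq_of_lt b.isLt, add_zero]
  · apply congrArg
    apply Fin.ext
    show j.val % 2^m = b.val
    rw [h, Nat.mul_add_mod, Nat.mod_eq_of_lt b.isLt]

lemma normSq_tensor {n m : ℕ} (u : QReg n) (v : QReg m) :
    ‖tensor u v‖^2 = ‖u‖^2 * ‖v‖^2 := by
  rw [normSq_eq (tensor u v), sum_split n m, normSq_eq u, normSq_eq v, Finset.sum_mul_sum]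
  refine Finset.sum_congr rfl fun a _ => Finset.sum_congr rfl fun b _ => ?_
  rw [tensor_apply u v _ a b rfl, norm_mul, mul_pow]

lemma toff_invol (n m : ℕ) : Function.Involutive (toffIdx n m) := by
  intro j
  have hn1 : 1 ≤ n + m + 1 := by omega
  by_cases hC : (j.val / 2^(m+1)) % 2 = 1 ∧ (j.val / 2) % 2 = 1
  · have h1 : toffIdx n m j = flipIdx j := by unfold toffIdx; rw [if_pos hC]
    have hfv : (flipIdx j).val = j.val ^^^ 1 := flip_val hn1 j
    have hdiv2 : (j.val ^^^ 1) / 2 = j.val / 2 := by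
      rcases xor_one_cases j.val with ⟨ha, hb⟩ | ⟨ha, hb⟩ <;> omega
    have hC' : ((flipIdx j).val / 2^(m+1)) % 2 = 1 ∧ ((flipIdx j).val / 2) % 2 = 1 := by
      constructor
      · have : (flipIdx j).val / 2^(m+1) = j.val / 2^(m+1) := by
          rw [hfv, show (2:ℕ)^(m+1) = 2 * 2^m from by ring, ← Nat.div_div_eq_div_mul,
            ← Nat.div_div_eq_div_mul, hdiv2]
        rw [this]; exact hC.1
      · rw [hfv, hdiv2]; exact hC.2
    have h2 : toffIdx n m (flipIdx j) = flipIdx (flipIdx j) := by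
      unfold toffIdx; rw [if_pos hC']
    rw [h1, h2]
    exact flip_invol hn1 j
  · have h1 : toffIdx n m j = j := by unfold toffIdx; rw [if_neg hC]
    rw [h1, h1]

lemma normSq_Tg (n m : ℕ) (ψ : QReg (n+m+1)) : ‖Tg n m ψ‖^2 = ‖ψ‖^2 := by
  rw [normSq_eq, normSq_eq]
  exact Fintype.sum_bijective (toffIdx n m) (toff_invol n m).bijective _ _ fun j => rfl

lemma sum_fin_two' (S : Fin (2^1) → ℝ) (x y : ℝ)
    (h0 : ∀ r : Fin (2^1), r.val = 0 → S r = x)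
    (h1 : ∀ r : Fin (2^1), r.val = 1 → S r = y) : ∑ r, S r = x + y := by
  have h : S 0 + S 1 = x + y := by rw [h0 0 rfl, h1 1 rfl]
  exact (Fin.sum_univ_two S).trans h

lemma normSq_ket0 : ‖ket0‖^2 = 1 := by
  rw [normSq_eq]
  rw [sum_fin_two' _ 1 0 ?_ ?_]
  · norm_num
  · intro r hr
    have : ket0 r = 1 := by unfold ket0; rw [WithLp.ofLp_toLp, if_pos hr]
    rw [this]; norm_num
  · intro r hr
    have : ket0 r = 0 := by unfold ket0; rw [WithLp.ofLp_toLp, if_neg (by omega)]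
    rw [this]; norm_num

lemma normSq_AND (n m : ℕ) (u : QReg n) (v : QReg m) :
    ‖ANDg n m u v‖^2 = ‖u‖^2 * ‖v‖^2 := by
  unfold ANDg
  rw [normSq_Tg, normSq_tensor, normSq_tensor, normSq_ket0, mul_one]

lemma AND_term {n m : ℕ} (hm : 1 ≤ m) (u : QReg n) (v : QReg m)
    (a : Fin (2^n)) (b : Fin (2^m)) (j : Fin (2^(n+m+1)))
    (hj : j.val = 2 * (2^m * a.val + b.val) + 1) :
    ‖ANDg n m u v j‖^2 =
      (if a.val % 2 = 1 then ‖u a‖^2 else 0) * (if b.val % 2 = 1 then ‖v b‖^2 else 0) := by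
  have h2m : (2:ℕ) ∣ 2^m := dvd_pow_self 2 (by omega)
  have hdvd : 2 ∣ 2^m * a.val := h2m.mul_right _
  have hj2 : j.val / 2 = 2^m * a.val + b.val := by omega
  have hdiv : j.val / 2^(m+1) % 2 = a.val % 2 := by
    rw [show (2:ℕ)^(m+1) = 2 * 2^m from by ring, ← Nat.div_div_eq_div_mul, hj2,
        Nat.mul_add_div (Nat.two_pow_pos m), Nat.div_eq_of_lt b.isLt, add_zero]
  have hmod : j.val / 2 % 2 = b.val % 2 := by rw [hj2]; omega
  show ‖tensor (tensor u v) ket0 (toffIdx n m j)‖^2 = _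
  by_cases hab : a.val % 2 = 1 ∧ b.val % 2 = 1
  · have hC : (j.val / 2^(m+1)) % 2 = 1 ∧ (j.val / 2) % 2 = 1 := ⟨by omega, by omega⟩
    have ht : toffIdx n m j = flipIdx j := by unfold toffIdx; rw [if_pos hC]
    have hfv : (flipIdx j).val = 2 * (2^m * a.val + b.val) := by
      rw [flip_val (by omega) j, hj, xor_odd']
    rw [ht, tensor_apply (tensor u v) ket0 (flipIdx j) ⟨_, combine_lt a b⟩ ⟨0, by norm_num⟩
      (by rw [hfv]; show _ = 2^1 * (2^m * a.val + b.val) + 0; ring),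
      tensor_apply u v _ a b rfl]
    have hk : ket0 ⟨0, by norm_num⟩ = 1 := by unfold ket0; rw [WithLp.ofLp_toLp, if_pos rfl]
    rw [hk, mul_one, if_pos hab.1, if_pos hab.2, norm_mul, mul_pow]
  · have hC : ¬((j.val / 2^(m+1)) % 2 = 1 ∧ (j.val / 2) % 2 = 1) := by
      intro h
      exact hab ⟨by omega, by omega⟩
    have ht : toffIdx n m j = j := by unfold toffIdx; rw [if_neg hC]
    rw [ht, tensor_apply (tensor u v) ket0 j ⟨_, combine_lt a b⟩ ⟨1, by norm_num⟩
      (by rw [hj]; show _ = 2^1 * (2^m * a.val + b.val) + 1; ring)]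
    have hk : ket0 ⟨1, by norm_num⟩ = 0 := by unfold ket0; rw [WithLp.ofLp_toLp, if_neg (by norm_num)]
    rw [hk, mul_zero]
    by_cases ha : a.val % 2 = 1
    · by_cases hb : b.val % 2 = 1
      · exact absurd ⟨ha, hb⟩ hab
      · rw [if_neg hb, mul_zero, norm_zero]; norm_num
    · rw [if_neg ha, zero_mul, norm_zero]; norm_num

lemma prob_AND (n m : ℕ) (hn : 1 ≤ n) (hm : 1 ≤ m) (u : QReg n) (v : QReg m) :
    Prob (ANDg n m u v) = Prob u * Prob v := by
  rw [prob_eq]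
  have e1 := sum_split (n+m) 1
    (fun j => if j.val % 2 = 1 then ‖ANDg n m u v j‖^2 else 0)
  have e2 := sum_split n m
    (fun c => ∑ r : Fin (2^1),
      if (splitE (n+m) 1 (c, r)).val % 2 = 1 then ‖ANDg n m u v (splitE (n+m) 1 (c, r))‖^2 else 0)
  rw [e1, e2, prob_eq u, prob_eq v, Finset.sum_mul_sum]
  refine Finset.sum_congr rfl fun a _ => Finset.sum_congr rfl fun b _ => ?_
  have h21 : (2:ℕ)^1 = 2 := by norm_num
  refine (sum_fin_two' _ 0 _ ?_ ?_).trans (zero_add _)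
  · intro r hr
    have hv : (splitE (n+m) 1 (splitE n m (a, b), r)).val = 2^1 * (2^m * a.val + b.val) + r.val := rfl
    rw [if_neg (by omega)]
  · intro r hr
    have hv : (splitE (n+m) 1 (splitE n m (a, b), r)).val = 2^1 * (2^m * a.val + b.val) + r.val := rfl
    rw [if_pos (by omega), AND_term hm u v a b _ (by omega)]

lemma prob_OR (n m : ℕ) (hn : 1 ≤ n) (hm : 1 ≤ m) (u : QReg n) (v : QReg m) :
    Prob (ORg n m u v) = ‖u‖^2 * ‖v‖^2 - (‖u‖^2 - Prob u) * (‖v‖^2 - Prob v) := by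
  unfold ORg
  rw [prob_NOT (by omega), normSq_AND, normSq_NOT hn, normSq_NOT hm,
    prob_AND n m hn hm, prob_NOT hn, prob_NOT hm]

theorem stmt17 (n m k : ℕ) (hn : 1 ≤ n) (hm : 1 ≤ m) (hk : 1 ≤ k)
    (ψ : QReg n) (φ : QReg m) (χ : QReg k)
    (hψ : ‖ψ‖ = 1) (hφ : ‖φ‖ = 1) (hχ : ‖χ‖ = 1) :
    Prob (ANDg n (m + k + 1) ψ (ORg m k φ χ)) ≤
      Prob (ORg (n + m + 1) (n + k + 1) (ANDg n m ψ φ) (ANDg n k ψ χ)) := by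
  have hψ2 : ‖ψ‖^2 = 1 := by rw [hψ]; norm_num
  have hφ2 : ‖φ‖^2 = 1 := by rw [hφ]; norm_num
  have hχ2 : ‖χ‖^2 = 1 := by rw [hχ]; norm_num
  have hp0 := prob_nonneg ψ
  have hq0 := prob_nonneg φ
  have hr0 := prob_nonneg χ
  have hp1 : Prob ψ ≤ 1 := by have := prob_le_normSq ψ; rw [hψ2] at this; exact this
  have hq1 : Prob φ ≤ 1 := by have := prob_le_normSq φ; rw [hφ2] at this; exact this
  have hr1 : Prob χ ≤ 1 := by have := prob_le_normSq χ; rw [hχ2] at this; exact this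
  rw [prob_AND n (m+k+1) hn (by omega), prob_OR m k hm hk,
    prob_OR (n+m+1) (n+k+1) (by omega) (by omega),
    prob_AND n m hn hm, prob_AND n k hn hk, normSq_AND, normSq_AND,
    hψ2, hφ2, hχ2]
  nlinarith [mul_nonneg (mul_nonneg (mul_nonneg hp0 hq0) hr0) (sub_nonneg.mpr hp1),
    mul_nonneg hq0 hr0]

end
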